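/- If X is infinite, the C-algebra 𝟛^X is not atomic: the constant function T cannot be expressed as a join of finitely many atoms. -/

import Mathlib

/-- The three truth values of McCarthy's three-valued logic. -/
inductive Three : Type
  | T | F | U
deriving DecidableEq

open Three

/-- Negation in `𝟛`. -/
def tneg : Three → Three
  | T => F
  | F => T
  | U => U

/-- McCarthy's left-sequential conjunction. -/
def tand : Three → Three → Three
  | T, x => x
  | F, _ => F
  | U, _ => U

/-- McCarthy's left-sequential disjunction. -/
def tor : Three → Three → Three
  | T, _ => T
  | F, x => x
  | U, _ => U

/-- Pointwise disjunction on `𝟛^X`. -/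
def fOr {X : Type*} (α β : X → Three) : X → Three := fun x => tor (α x) (β x)

/-- Pointwise conjunction on `𝟛^X`. -/
def fAnd {X : Type*} (α β : X → Three) : X → Three := fun x => tand (α x) (β x)

/-- Pointwise negation on `𝟛^X`. -/
def fNeg {X : Type*} (α : X → Three) : X → Three := fun x => tneg (α x)

/-- The constant function `F`, the bottom element of `𝟛^X`. -/
def bF {X : Type*} : X → Three := fun _ => F

/-- The order on `𝟛^X`: `α ≤ β` iff `α ∨ β = β`. -/
def fLe {X : Type*} (α β : X → Three) : Prop := fOr α β = β

/-- `α` is an atom of `𝟛^X`: `α ≠ F` and any `b` with `F ≤ b ≤ α`, `b ≠ α` is `F`. -/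
def IsAtom3 {X : Type*} (α : X → Three) : Prop :=
  α ≠ bF ∧ ∀ β : X → Three, fLe bF β → fLe β α → β ≠ α → β = bF

open Classical in
lemma atom_support_subsingleton {X : Type*} {α : X → Three} (h : IsAtom3 α) :
    {x : X | α x ≠ F}.Subsingleton := by
  intro x₁ hx₁ x₂ hx₂
  by_contra hne
  set β : X → Three := fun x => if x = x₁ then α x₁ else F with hβ
  have htor : ∀ a : Three, tor a a = a := by intro a; cases a <;> rfl
  have h1 : fLe bF β := by
    funext x; simp only [fOr, bF, tor]
  have h2 : fLe β α := by
    funext x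
    by_cases hx : x = x₁
    · subst hx; simp [fOr, hβ, htor]
    · simp [fOr, hβ, hx, tor]
  have h3 : β ≠ α := by
    intro he
    apply hx₂
    have : β x₂ = α x₂ := by rw [he]
    simp only [hβ] at this
    rw [if_neg (fun h => hne h.symm)] at this
    exact this.symm
  have := h.2 β h1 h2 h3
  apply hx₁
  have : β x₁ = F := by rw [this]; rfl
  simpa [hβ] using this

lemma foldr_support_finite {X : Type*} (l : List (X → Three))
    (hl : ∀ a ∈ l, IsAtom3 a) : {x : X | l.foldr fOr bF x ≠ F}.Finite := by
  induction l with
  | nil => simp [bF]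
  | cons a t ih =>
    have ha := atom_support_subsingleton (hl a (by simp))
    have ht := ih (fun b hb => hl b (List.mem_cons_of_mem _ hb))
    have : {x : X | (a :: t).foldr fOr bF x ≠ F} ⊆
        {x : X | a x ≠ F} ∪ {x : X | t.foldr fOr bF x ≠ F} := by
      intro x hx
      simp only [List.foldr_cons, fOr, Set.mem_setOf_eq] at hx
      by_contra hc
      simp only [Set.mem_union, Set.mem_setOf_eq, not_or, not_not] at hc
      rw [hc.1, hc.2] at hx
      exact hx rfl
    exact Set.Finite.subset ((ha.finite).union ht) this

/-- For infinite `X`, `𝟛^X` is not atomic: the constant function `T` is not a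
join of finitely many atoms. -/
theorem stmt13 {X : Type*} [Infinite X] :
    ∀ l : List (X → Three), (∀ a ∈ l, IsAtom3 a) →
      l.foldr fOr bF ≠ fun _ => Three.T := by
  intro l hl heq
  obtain ⟨x, hx⟩ := (foldr_support_finite l hl).infinite_compl.nonempty
  have : l.foldr fOr bF x = T := congrFun heq x
  exact hx (by simp [Set.mem_setOf_eq, this])
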